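/- Let a > 0 and t > 0, and define the operator G(s) for s ≥ 0 on functions f : ℝ → ℝ by (G(s)f)(x) = (1/6)·f(x + a√(6s)) + (1/6)·f(x − a√(6s)) + (2/3)·f(x). Then for every f : ℝ → ℝ, every positive integer n, and every x ∈ ℝ, ((G(t/n))^n f)(x) = 6^{−n} · Σ_{p = −n}^{n} β_{p,n} · f(x + a·p·√(6t/n)), where β_{p,n} = Σ_{k = 0}^{⌊(n − |p|)/2⌋} (n choose k)·((n − k) choose (k + |p|))·4^{n − |p| − 2k}. -/

import Mathlib

open Real Function

/-- The coefficients `β_{p,n}` from Proposition on the second Chernoff function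
for the heat equation:
`β_{p,n} = ∑_{k=0}^{⌊(n-|p|)/2⌋} (n choose k) ((n-k) choose (k+|p|)) 4^(n-|p|-2k)`. -/
def betaCoeff (p : ℤ) (n : ℕ) : ℕ :=
  ∑ k ∈ Finset.range ((n - p.natAbs) / 2 + 1),
    Nat.choose n k * Nat.choose (n - k) (k + p.natAbs) * 4 ^ (n - p.natAbs - 2 * k)

namespace ChernoffAux

open Finset

/-- A single term in the trinomial expansion. -/
def T (n q k : ℕ) : ℕ := n.choose k * (n - k).choose (k + q) * 4 ^ (n - q - 2 * k)

lemma T_eq_zero {n q k : ℕ} (h : n < 2 * k + q) : T n q k = 0 := by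
  rcases le_or_gt k n with hk | hk
  · have h2 : n - k < k + q := by omega
    simp [T, Nat.choose_eq_zero_of_lt h2]
  · simp [T, Nat.choose_eq_zero_of_lt hk]

lemma choose_swap (n a b : ℕ) :
    n.choose a * (n - a).choose b = n.choose b * (n - b).choose a := by
  rcases le_or_gt (a + b) n with h | h
  · have h1 := Nat.choose_mul (n := n) (k := a + b) (s := a) (Nat.le_add_right a b)
    have h2 := Nat.choose_mul (n := n) (k := a + b) (s := b) (Nat.le_add_left b a)
    rw [Nat.add_sub_cancel_left] at h1
    rw [Nat.add_sub_cancel] at h2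
    rw [← h1, ← h2, Nat.choose_symm_add]
  · have e1 : n.choose a * (n - a).choose b = 0 := by
      rcases le_or_gt a n with ha | ha
      · have : n - a < b := by omega
        simp [Nat.choose_eq_zero_of_lt this]
      · simp [Nat.choose_eq_zero_of_lt ha]
    have e2 : n.choose b * (n - b).choose a = 0 := by
      rcases le_or_gt b n with hb | hb
      · have : n - b < a := by omega
        simp [Nat.choose_eq_zero_of_lt this]
      · simp [Nat.choose_eq_zero_of_lt hb]
    rw [e1, e2]

lemma key0 (n q : ℕ) : T (n + 1) (q + 1) 0 = T n q 0 + 4 * T n (q + 1) 0 := by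
  simp only [T, Nat.choose_zero_right, one_mul, Nat.mul_zero, Nat.sub_zero, Nat.zero_add,
    Nat.choose_succ_succ' n q]
  rw [show n + 1 - (q + 1) = n - q from by omega]
  rcases le_or_gt (q + 1) n with h | h
  · rw [show n - q = (n - (q + 1)) + 1 from by omega, pow_succ]
    ring
  · rw [Nat.choose_eq_zero_of_lt (show n < q + 1 from h)]
    ring

lemma key1 (n q k : ℕ) :
    T (n + 1) (q + 1) (k + 1) = T n (q + 2) k + (4 * T n (q + 1) (k + 1) + T n q (k + 1)) := by
  rcases le_or_gt n k with hk | hk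
  · have h1 : n.choose (k + 1) = 0 := Nat.choose_eq_zero_of_lt (by omega)
    have h2 : T n (q + 1) (k + 1) = 0 := by simp [T, h1]
    have h3 : T n q (k + 1) = 0 := by simp [T, h1]
    rw [h2, h3]
    simp only [T, Nat.choose_succ_succ' n k, h1, Nat.add_zero]
    rw [show n + 1 - (k + 1) = n - k from by omega,
      show k + 1 + (q + 1) = k + (q + 2) from by omega,
      show n + 1 - (q + 1) - 2 * (k + 1) = n - (q + 2) - 2 * k from by omega]
    ring
  · obtain ⟨m, hm⟩ : ∃ m, n - k = m + 1 := ⟨n - k - 1, by omega⟩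
    have hc : (m + 1).choose (k + q + 2) = m.choose (k + q + 1) + m.choose (k + q + 2) := by
      have := Nat.choose_succ_succ' m (k + q + 1)
      simpa [show k + q + 1 + 1 = k + q + 2 from by omega] using this
    simp only [T, Nat.choose_succ_succ' n k]
    rw [show n + 1 - (k + 1) = m + 1 from by omega,
      show n - (k + 1) = m from by omega, hm,
      show k + 1 + (q + 1) = k + q + 2 from by omega,
      show k + (q + 2) = k + q + 2 from by omega,
      show k + 1 + q = k + q + 1 from by omega, hc,
      show n + 1 - (q + 1) - 2 * (k + 1) = n - q - 2 * k - 2 from by omega,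
      show n - (q + 2) - 2 * k = n - q - 2 * k - 2 from by omega,
      show n - q - 2 * (k + 1) = n - q - 2 * k - 2 from by omega,
      show n - (q + 1) - 2 * (k + 1) = n - q - 2 * k - 3 from by omega]
    rcases le_or_gt (q + 2 * k + 3) n with h | h
    · rw [show n - q - 2 * k - 2 = (n - q - 2 * k - 3) + 1 from by omega, pow_succ]
      ring
    · rw [Nat.choose_eq_zero_of_lt (show m < k + q + 2 from by omega)]
      ring

lemma key_zero (n k : ℕ) : T (n + 1) 0 (k + 1) = 2 * T n 1 k + 4 * T n 0 (k + 1) := by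
  rcases le_or_gt n k with hk | hk
  · have h1 : n.choose (k + 1) = 0 := Nat.choose_eq_zero_of_lt (by omega)
    have h2 : (n - k).choose (k + 1) = 0 := Nat.choose_eq_zero_of_lt (by omega)
    simp [T, h1, h2, Nat.choose_succ_succ' n k, show k + 1 + 0 = k + 1 from rfl,
      show k + 0 + 1 = k + 1 from by omega]
  · obtain ⟨m, hm⟩ : ∃ m, n - k = m + 1 := ⟨n - k - 1, by omega⟩
    have hswap : n.choose (k + 1) * m.choose k = n.choose k * (m + 1).choose (k + 1) := by
      have := choose_swap n (k + 1) k
      rw [show n - (k + 1) = m from by omega] at this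
      rw [this, hm]
    have hc : (m + 1).choose (k + 1) = m.choose k + m.choose (k + 1) :=
      Nat.choose_succ_succ' m k
    simp only [T, Nat.choose_succ_succ' n k, Nat.add_zero, Nat.zero_add]
    rw [show n + 1 - (k + 1) = m + 1 from by omega,
      show n - (k + 1) = m from by omega, hm,
      show k + 1 + 0 = k + 1 from by omega,
      show k + 0 + 1 = k + 1 from by omega,
      hc,
      show n + 1 - 0 - 2 * (k + 1) = n - 2 * k - 1 from by omega,
      show n - 1 - 2 * k = n - 2 * k - 1 from by omega,
      show n - 0 - 2 * (k + 1) = n - 2 * k - 2 from by omega]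
    have hswap' : n.choose (k + 1) * m.choose k
        = n.choose k * m.choose k + n.choose k * m.choose (k + 1) := by
      rw [hswap, hc]; ring
    rcases le_or_gt (2 * k + 2) n with h | h
    · rw [show n - 2 * k - 1 = (n - 2 * k - 2) + 1 from by omega, pow_succ]
      have hz := congrArg (Nat.cast (R := ℤ)) hswap'
      push_cast at hz
      zify
      linear_combination (4 * (4 : ℤ) ^ (n - 2 * k - 2)) * hz
    · have hCm1 : m.choose (k + 1) = 0 := Nat.choose_eq_zero_of_lt (by omega)
      rw [hCm1]
      rw [hCm1] at hswap'
      have hz := congrArg (Nat.cast (R := ℤ)) hswap'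
      push_cast at hz
      zify
      linear_combination ((4 : ℤ) ^ (n - 2 * k - 1)) * hz

/-- The trinomial-type coefficient as a full sum. -/
def B (q n : ℕ) : ℕ := ∑ k ∈ Finset.range (n + 1), T n q k

lemma B_ext (q n N : ℕ) (h : n + 1 ≤ N) : ∑ k ∈ Finset.range N, T n q k = B q n := by
  rw [B]
  exact (Finset.sum_subset (Finset.range_subset_range.2 h)
    (fun k _ hk => T_eq_zero (by simp only [Finset.mem_range] at hk ⊢; omega))).symm

lemma B_zero_of_lt {q n : ℕ} (h : n < q) : B q n = 0 :=
  Finset.sum_eq_zero fun k _ => T_eq_zero (by omega)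

lemma B_rec_succ (q n : ℕ) :
    B (q + 1) (n + 1) = B q n + (4 * B (q + 1) n + B (q + 2) n) := by
  have e2 : B q n = (∑ k ∈ Finset.range (n + 1), T n q (k + 1)) + T n q 0 := by
    rw [← B_ext q n (n + 2) (by omega), Finset.sum_range_succ']
  have e3 : B (q + 1) n = (∑ k ∈ Finset.range (n + 1), T n (q + 1) (k + 1)) + T n (q + 1) 0 := by
    rw [← B_ext (q + 1) n (n + 2) (by omega), Finset.sum_range_succ']
  have e4 : B (q + 2) n = ∑ k ∈ Finset.range (n + 1), T n (q + 2) k := rfl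
  rw [B, Finset.sum_range_succ']
  simp only [key1, key0]
  rw [Finset.sum_add_distrib, Finset.sum_add_distrib, ← Finset.mul_sum, e2, e3, e4]
  ring

lemma B_rec_zero (n : ℕ) : B 0 (n + 1) = 2 * B 1 n + 4 * B 0 n := by
  have e0 : B 0 n = (∑ k ∈ Finset.range (n + 1), T n 0 (k + 1)) + T n 0 0 := by
    rw [← B_ext 0 n (n + 2) (by omega), Finset.sum_range_succ']
  have e1 : B 1 n = ∑ k ∈ Finset.range (n + 1), T n 1 k := rfl
  have eT : T (n + 1) 0 0 = 4 * T n 0 0 := by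
    simp [T, pow_succ]; ring
  rw [B, Finset.sum_range_succ']
  simp only [key_zero, eT]
  rw [Finset.sum_add_distrib, ← Finset.mul_sum, ← Finset.mul_sum, ← e1, e0]
  ring

lemma betaCoeff_eq (p : ℤ) (n : ℕ) : betaCoeff p n = B p.natAbs n := by
  rw [betaCoeff, B]
  apply Finset.sum_subset (Finset.range_subset_range.2 (by omega))
  intro k hk hk'
  simp only [Finset.mem_range] at hk hk'
  have := T_eq_zero (n := n) (q := p.natAbs) (k := k) (by omega)
  simpa [T] using this

lemma Brec (m : ℕ) (p : ℤ) :
    B p.natAbs (m + 1)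
      = B (p - 1).natAbs m + (4 * B p.natAbs m + B (p + 1).natAbs m) := by
  rcases lt_trichotomy p 0 with h | h | h
  · have h1 : p.natAbs = (p + 1).natAbs + 1 := by omega
    have h2 : (p - 1).natAbs = (p + 1).natAbs + 2 := by omega
    rw [h1, h2, B_rec_succ]
    ring
  · subst h
    rw [show ((0 : ℤ) - 1).natAbs = 1 from rfl, show ((0 : ℤ) + 1).natAbs = 1 from rfl,
      show (0 : ℤ).natAbs = 0 from rfl, B_rec_zero]
    ring
  · have h1 : p.natAbs = (p - 1).natAbs + 1 := by omega
    have h2 : (p + 1).natAbs = (p - 1).natAbs + 2 := by omega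
    rw [h1, h2, B_rec_succ]

lemma shift (m : ℕ) (d : ℤ) (hd : d.natAbs ≤ 1) (g : ℤ → ℝ) :
    ∑ p ∈ Finset.Icc (-(m : ℤ) - 1) ((m : ℤ) + 1), (B (p + d).natAbs m : ℝ) * g p
      = ∑ p ∈ Finset.Icc (-(m : ℤ)) (m : ℤ), (B p.natAbs m : ℝ) * g (p - d) := by
  have hsub : Finset.Icc (-(m : ℤ) + -d) ((m : ℤ) + -d) ⊆
      Finset.Icc (-(m : ℤ) - 1) ((m : ℤ) + 1) := by
    intro p hp
    simp only [Finset.mem_Icc] at hp ⊢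
    omega
  have h1 : ∑ p ∈ Finset.Icc (-(m : ℤ) - 1) ((m : ℤ) + 1), (B (p + d).natAbs m : ℝ) * g p
      = ∑ p ∈ Finset.Icc (-(m : ℤ) + -d) ((m : ℤ) + -d), (B (p + d).natAbs m : ℝ) * g p := by
    refine (Finset.sum_subset hsub fun p hp hp' => ?_).symm
    simp only [Finset.mem_Icc] at hp hp'
    have : m < (p + d).natAbs := by omega
    rw [B_zero_of_lt this]
    simp
  rw [h1, ← Finset.map_add_right_Icc (-(m : ℤ)) (m : ℤ) (-d), Finset.sum_map]
  apply Finset.sum_congr rfl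
  intro p _
  simp only [addRightEmbedding_apply]
  rw [show p + -d + d = p from by ring, show p + -d = p - d from by ring]

lemma iterate_formula (L : (ℝ → ℝ) → (ℝ → ℝ)) (h : ℝ)
    (hL : ∀ (g : ℝ → ℝ) (x : ℝ),
      L g x = 1 / 6 * g (x + h) + 1 / 6 * g (x - h) + 2 / 3 * g x) :
    ∀ (m : ℕ) (f : ℝ → ℝ) (x : ℝ),
      L^[m] f x = (1 / 6 ^ m) *
        ∑ p ∈ Finset.Icc (-(m : ℤ)) (m : ℤ), (B p.natAbs m : ℝ) * f (x + h * p) := by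
  intro m
  induction m with
  | zero =>
    intro f x
    simp [B, T]
  | succ m IH =>
    intro f x
    rw [Function.iterate_succ_apply', hL, IH f (x + h), IH f (x - h), IH f x]
    have hbounds : Finset.Icc (-((m + 1 : ℕ) : ℤ)) (((m + 1 : ℕ) : ℤ))
        = Finset.Icc (-(m : ℤ) - 1) ((m : ℤ) + 1) := by
      congr 1 <;> push_cast <;> ring
    have hsplit : ∑ p ∈ Finset.Icc (-((m + 1 : ℕ) : ℤ)) (((m + 1 : ℕ) : ℤ)),
          (B p.natAbs (m + 1) : ℝ) * f (x + h * p)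
        = (∑ p ∈ Finset.Icc (-(m : ℤ)) (m : ℤ), (B p.natAbs m : ℝ) * f (x + h + h * p))
          + (∑ p ∈ Finset.Icc (-(m : ℤ)) (m : ℤ), (B p.natAbs m : ℝ) * f (x - h + h * p))
          + 4 * ∑ p ∈ Finset.Icc (-(m : ℤ)) (m : ℤ), (B p.natAbs m : ℝ) * f (x + h * p) := by
      rw [hbounds]
      have step1 : ∀ p ∈ Finset.Icc (-(m : ℤ) - 1) ((m : ℤ) + 1),
          (B p.natAbs (m + 1) : ℝ) * f (x + h * p)
            = (B (p + (-1)).natAbs m : ℝ) * f (x + h * p)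
              + ((B (p + 1).natAbs m : ℝ) * f (x + h * p)
              + 4 * ((B (p + 0).natAbs m : ℝ) * f (x + h * p))) := by
        intro p _
        have := Brec m p
        rw [show p + (-1) = p - 1 from by ring, show p + 0 = p from by ring, this]
        push_cast
        ring
      rw [Finset.sum_congr rfl step1, Finset.sum_add_distrib, Finset.sum_add_distrib,
        ← Finset.mul_sum]
      rw [shift m (-1) (by norm_num) (fun p : ℤ => f (x + h * p)),
        shift m 1 (by norm_num) (fun p : ℤ => f (x + h * p)),
        shift m 0 (by norm_num) (fun p : ℤ => f (x + h * p))]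
      have c1 : ∀ p ∈ Finset.Icc (-(m : ℤ)) (m : ℤ),
          (B p.natAbs m : ℝ) * f (x + h * ((p - (-1) : ℤ) : ℝ))
            = (B p.natAbs m : ℝ) * f (x + h + h * p) := by
        intro p _
        congr 1
        push_cast
        ring
      have c2 : ∀ p ∈ Finset.Icc (-(m : ℤ)) (m : ℤ),
          (B p.natAbs m : ℝ) * f (x + h * ((p - 1 : ℤ) : ℝ))
            = (B p.natAbs m : ℝ) * f (x - h + h * p) := by
        intro p _
        congr 1
        push_cast
        ring
      have c3 : ∀ p ∈ Finset.Icc (-(m : ℤ)) (m : ℤ),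
          (B p.natAbs m : ℝ) * f (x + h * ((p - 0 : ℤ) : ℝ))
            = (B p.natAbs m : ℝ) * f (x + h * p) := by
        intro p _
        congr 1
        push_cast
        ring
      rw [Finset.sum_congr rfl c1, Finset.sum_congr rfl c2, Finset.sum_congr rfl c3]
      ring
    rw [hsplit]
    ring

end ChernoffAux

theorem chernoff_heat_second_iterate
    (a t : ℝ) (ha : 0 < a) (ht : 0 < t)
    (G : ℝ → (ℝ → ℝ) → (ℝ → ℝ))
    (hG : ∀ s : ℝ, 0 ≤ s → ∀ (f : ℝ → ℝ) (x : ℝ),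
      G s f x = (1 / 6) * f (x + a * Real.sqrt (6 * s))
        + (1 / 6) * f (x - a * Real.sqrt (6 * s)) + (2 / 3) * f x)
    (f : ℝ → ℝ) (n : ℕ) (hn : 0 < n) (x : ℝ) :
    (G (t / n))^[n] f x
      = (1 / 6 ^ n) * ∑ p ∈ Finset.Icc (-(n : ℤ)) (n : ℤ),
          (betaCoeff p n : ℝ) * f (x + a * (p : ℝ) * Real.sqrt (6 * t / n)) := by
  have hnpos : (0 : ℝ) < n := by exact_mod_cast hn
  have hs : (0 : ℝ) ≤ t / n := le_of_lt (div_pos ht hnpos)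
  have hL : ∀ (g : ℝ → ℝ) (y : ℝ),
      G (t / n) g y = 1 / 6 * g (y + a * Real.sqrt (6 * (t / n)))
        + 1 / 6 * g (y - a * Real.sqrt (6 * (t / n)))
        + 2 / 3 * g y := fun g y => hG (t / n) hs g y
  rw [ChernoffAux.iterate_formula (G (t / n)) (a * Real.sqrt (6 * (t / n))) hL n f x]
  congr 1
  apply Finset.sum_congr rfl
  intro p _
  rw [ChernoffAux.betaCoeff_eq]
  congr 1
  rw [show (6 : ℝ) * (t / n) = 6 * t / n from by ring]
  ring
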